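/- Let S₁ and S₂ be two non-isomorphic Steiner triple systems STS(v) on [v] (no bijection of [v] carries the triples of S₁ onto the triples of S₂), with adjacency tensors A₁, A₂ ∈ S^{3,v}. Then for every doubly stochastic v × v matrix D, ⟨A₁, D^{⊗3}·A₂⟩ < v(v−1); consequently the Sinkhorn relaxed alignment scores satisfy Θ̂^{SK}_{A₁}(A₂) = max over D ∈ B_v of ⟨A₁, D^{⊗3}·A₂⟩ < v(v−1) = Θ̂^{SK}_{A₁}(A₁). -/

import Mathlib

/-- A doubly stochastic matrix: nonnegative entries, all row sums and column sums equal 1. -/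
def IsDoublyStochastic {n : ℕ} (D : Fin n → Fin n → ℝ) : Prop :=
  (∀ i j, 0 ≤ D i j) ∧ (∀ i, ∑ j, D i j = 1) ∧ (∀ j, ∑ i, D i j = 1)

/-- `(D^{⊗k} · A)_{i₁,…,i_k} = ∑_{j₁,…,j_k} (∏_ℓ D_{i_ℓ j_ℓ}) · A_{j₁,…,j_k}`. -/
noncomputable def tensorApply {k n : ℕ} (D : Fin n → Fin n → ℝ)
    (A : (Fin k → Fin n) → ℝ) : (Fin k → Fin n) → ℝ :=
  fun i => ∑ j : Fin k → Fin n, (∏ l, D (i l) (j l)) * A j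

/-- Entrywise inner product of tensors: `⟨P, B⟩ = ∑_{i₁,…,i_k} P_i · B_i`. -/
noncomputable def tinner {k n : ℕ} (P B : (Fin k → Fin n) → ℝ) : ℝ :=
  ∑ i : Fin k → Fin n, P i * B i

/-- A Steiner triple system on `[v]`: a collection of 3-element subsets such that every
2-element subset is contained in exactly one triple. -/
def IsSTS (v : ℕ) (T : Finset (Finset (Fin v))) : Prop :=
  (∀ t ∈ T, t.card = 3) ∧
  ∀ x y : Fin v, x ≠ y → ∃! t : Finset (Fin v), t ∈ T ∧ x ∈ t ∧ y ∈ t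

open Classical in
/-- The 0–1 adjacency tensor of a triple system: `A_{ijk} = 1` iff `i,j,k` are distinct
and `{i,j,k}` is a triple. -/
noncomputable def stsAdj {v : ℕ} (T : Finset (Finset (Fin v))) : (Fin 3 → Fin v) → ℝ :=
  fun i => if Function.Injective i ∧ Finset.image i Finset.univ ∈ T then 1 else 0

open Finset

namespace STSAux

variable {v : ℕ}

lemma stsAdj_nonneg (T : Finset (Finset (Fin v))) (i : Fin 3 → Fin v) : 0 ≤ stsAdj T i := by
  unfold stsAdj; split <;> norm_num

lemma stsAdj_le_one (T : Finset (Finset (Fin v))) (i : Fin 3 → Fin v) : stsAdj T i ≤ 1 := by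
  unfold stsAdj; split <;> norm_num

lemma stsAdj_eq_one {T : Finset (Finset (Fin v))} {i : Fin 3 → Fin v}
    (h : Function.Injective i) (h2 : Finset.image i Finset.univ ∈ T) : stsAdj T i = 1 := by
  unfold stsAdj; rw [if_pos ⟨h, h2⟩]

lemma stsAdj_prop {T : Finset (Finset (Fin v))} {i : Fin 3 → Fin v}
    (h : stsAdj T i ≠ 0) : Function.Injective i ∧ Finset.image i Finset.univ ∈ T := by
  by_contra hc
  exact h (by unfold stsAdj; rw [if_neg hc])

lemma stsAdj_mul_self (T : Finset (Finset (Fin v))) (i : Fin 3 → Fin v) :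
    stsAdj T i * stsAdj T i = stsAdj T i := by
  unfold stsAdj; split <;> norm_num

lemma inj_vec {x y z : Fin v} (hxy : x ≠ y) (hxz : x ≠ z) (hyz : y ≠ z) :
    Function.Injective ![x, y, z] := by
  intro a b hab
  fin_cases a <;> fin_cases b <;>
    simp_all [Matrix.cons_val_zero, Matrix.cons_val_one, Matrix.head_cons]

lemma image_vec (x y z : Fin v) :
    Finset.image ![x, y, z] Finset.univ = {x, y, z} := by
  have h3 : (Finset.univ : Finset (Fin 3)) = {0, 1, 2} := by decide
  rw [h3]
  simp [Finset.image_insert]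

lemma card_filter_fiber {T : Finset (Finset (Fin v))} (hT : IsSTS v T)
    {p : Fin v × Fin v} (hp : p ∈ (Finset.univ : Finset (Fin v)).offDiag) :
    ((Finset.univ.filter
        (fun i : Fin 3 → Fin v => Function.Injective i ∧ Finset.image i Finset.univ ∈ T)).filter
      (fun i => (i 0, i 1) = p)).card = 1 := by
  classical
  obtain ⟨x, y⟩ := p
  rw [Finset.mem_offDiag] at hp
  have hxy : x ≠ y := hp.2.2
  obtain ⟨t, ⟨htT, hxt, hyt⟩, huniq⟩ := hT.2 x y hxy
  have ht3 := hT.1 t htT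
  have h1 : ({x, y} : Finset (Fin v)) ⊆ t := by
    intro a ha
    rcases Finset.mem_insert.mp ha with h | h
    · exact h ▸ hxt
    · exact (Finset.mem_singleton.mp h) ▸ hyt
  have hcard2 : ({x, y} : Finset (Fin v)).card = 2 := by
    rw [Finset.card_insert_of_notMem (by simp [hxy]), Finset.card_singleton]
  have hsd : (t \ {x, y}).card = 1 := by rw [Finset.card_sdiff_of_subset h1, ht3, hcard2]
  obtain ⟨z, hzs⟩ := Finset.card_eq_one.mp hsd
  have hzmem : z ∈ t \ ({x, y} : Finset (Fin v)) := hzs ▸ Finset.mem_singleton_self z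
  rw [Finset.mem_sdiff] at hzmem
  obtain ⟨hzt, hznot⟩ := hzmem
  have hzx : z ≠ x := fun h => hznot (by simp [h])
  have hzy : z ≠ y := fun h => hznot (by simp [h])
  have ht_eq : t = {x, y, z} := by
    have hu : ({x, y} : Finset (Fin v)) ∪ t \ {x, y} = t := Finset.union_sdiff_of_subset h1
    rw [hzs] at hu
    rw [← hu]; ext a
    simp only [Finset.mem_union, Finset.mem_insert, Finset.mem_singleton]; tauto
  rw [Finset.card_eq_one]
  refine ⟨![x, y, z], ?_⟩
  rw [Finset.eq_singleton_iff_unique_mem]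
  constructor
  · simp only [Finset.mem_filter, Finset.mem_univ, true_and]
    refine ⟨⟨inj_vec hxy (Ne.symm hzx) (Ne.symm hzy), ?_⟩, ?_⟩
    · rw [image_vec, ← ht_eq]; exact htT
    · simp [Matrix.cons_val_zero, Matrix.cons_val_one, Matrix.head_cons]
  · intro i hi
    simp only [Finset.mem_filter, Finset.mem_univ, true_and, Prod.mk.injEq] at hi
    obtain ⟨⟨hinj, himg⟩, hi0, hi1⟩ := hi
    have hximg : x ∈ Finset.image i Finset.univ := by
      rw [← hi0]; exact Finset.mem_image_of_mem i (Finset.mem_univ 0)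
    have hyimg : y ∈ Finset.image i Finset.univ := by
      rw [← hi1]; exact Finset.mem_image_of_mem i (Finset.mem_univ 1)
    have himg_eq : Finset.image i Finset.univ = t := huniq _ ⟨himg, hximg, hyimg⟩
    have hi2 : i 2 = z := by
      have h2img : i 2 ∈ ({x, y, z} : Finset (Fin v)) := by
        rw [← ht_eq, ← himg_eq]; exact Finset.mem_image_of_mem i (Finset.mem_univ 2)
      simp only [Finset.mem_insert, Finset.mem_singleton] at h2img
      rcases h2img with h | h | h
      · exact absurd (hinj (h.trans hi0.symm)) (by decide)
      · exact absurd (hinj (h.trans hi1.symm)) (by decide)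
      · exact h
    funext l
    fin_cases l <;>
      simp [hi0, hi1, hi2, Matrix.cons_val_zero, Matrix.cons_val_one, Matrix.head_cons]

lemma card_inj_triples {T : Finset (Finset (Fin v))} (hT : IsSTS v T) :
    (Finset.univ.filter
      (fun i : Fin 3 → Fin v => Function.Injective i ∧ Finset.image i Finset.univ ∈ T)).card
      = v * v - v := by
  classical
  rw [Finset.card_eq_sum_card_fiberwise
    (f := fun i : Fin 3 → Fin v => (i 0, i 1)) (t := (Finset.univ : Finset (Fin v)).offDiag)
    (by
      intro i hi
      simp only [Finset.mem_coe, Finset.mem_filter] at hi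
      rw [Finset.mem_coe, Finset.mem_offDiag]
      exact ⟨Finset.mem_univ _, Finset.mem_univ _, hi.2.1.ne (by decide)⟩)]
  rw [Finset.sum_congr rfl (fun p hp => card_filter_fiber hT hp)]
  rw [Finset.sum_const, smul_eq_mul, mul_one, Finset.offDiag_card, Finset.card_univ,
    Fintype.card_fin]

lemma exists_third {t : Finset (Fin v)} (ht : t.card = 3) {x y : Fin v}
    (hx : x ∈ t) (hy : y ∈ t) (hxy : x ≠ y) :
    ∃ z, z ≠ x ∧ z ≠ y ∧ t = {x, y, z} := by
  classical
  have h1 : ({x, y} : Finset (Fin v)) ⊆ t := by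
    intro a ha
    rcases Finset.mem_insert.mp ha with h | h
    · exact h ▸ hx
    · exact (Finset.mem_singleton.mp h) ▸ hy
  have hcard2 : ({x, y} : Finset (Fin v)).card = 2 := by
    rw [Finset.card_insert_of_notMem (by simp [hxy]), Finset.card_singleton]
  have hsd : (t \ {x, y}).card = 1 := by rw [Finset.card_sdiff_of_subset h1, ht, hcard2]
  obtain ⟨z, hzs⟩ := Finset.card_eq_one.mp hsd
  have hzmem : z ∈ t \ ({x, y} : Finset (Fin v)) := hzs ▸ Finset.mem_singleton_self z
  rw [Finset.mem_sdiff] at hzmem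
  obtain ⟨hzt, hznot⟩ := hzmem
  have hzx : z ≠ x := fun h => hznot (by simp [h])
  have hzy : z ≠ y := fun h => hznot (by simp [h])
  refine ⟨z, hzx, hzy, ?_⟩
  have hu : ({x, y} : Finset (Fin v)) ∪ t \ {x, y} = t := Finset.union_sdiff_of_subset h1
  rw [hzs] at hu
  rw [← hu]; ext a
  simp only [Finset.mem_union, Finset.mem_insert, Finset.mem_singleton]; tauto

lemma cast_vv : ((v * v - v : ℕ) : ℝ) = (v : ℝ) * ((v : ℝ) - 1) := by
  have hle : v ≤ v * v := by nlinarith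
  rw [Nat.cast_sub hle]
  push_cast
  ring

lemma sum_stsAdj {T : Finset (Finset (Fin v))} (hT : IsSTS v T) :
    ∑ i : Fin 3 → Fin v, stsAdj T i = (v : ℝ) * ((v : ℝ) - 1) := by
  classical
  unfold stsAdj
  rw [Finset.sum_boole, card_inj_triples hT, cast_vv]

lemma six_mul_card {T : Finset (Finset (Fin v))} (hT : IsSTS v T) :
    6 * T.card = v * v - v := by
  classical
  set f : Fin v × Fin v → Finset (Fin v) :=
    fun p => if h : p.1 ≠ p.2 then (hT.2 p.1 p.2 h).choose else ∅ with hf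
  have hmap : ∀ p ∈ (Finset.univ : Finset (Fin v)).offDiag, f p ∈ T := by
    intro p hp
    rw [Finset.mem_offDiag] at hp
    rw [hf]; dsimp only; rw [dif_pos hp.2.2]
    exact (hT.2 p.1 p.2 hp.2.2).choose_spec.1.1
  have hcard := Finset.card_eq_sum_card_fiberwise hmap
  have hfib : ∀ t ∈ T,
      ((Finset.univ : Finset (Fin v)).offDiag.filter (fun p => f p = t)).card = 6 := by
    intro t ht
    have heq : ((Finset.univ : Finset (Fin v)).offDiag.filter (fun p => f p = t)) = t.offDiag := by
      ext p
      simp only [Finset.mem_filter, Finset.mem_offDiag, Finset.mem_univ, true_and]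
      constructor
      · rintro ⟨hne, hfp⟩
        rw [hf] at hfp; dsimp only at hfp; rw [dif_pos hne] at hfp
        have hspec := (hT.2 p.1 p.2 hne).choose_spec.1
        rw [hfp] at hspec
        exact ⟨hspec.2.1, hspec.2.2, hne⟩
      · rintro ⟨h1, h2, hne⟩
        refine ⟨hne, ?_⟩
        rw [hf]; dsimp only; rw [dif_pos hne]
        exact ((hT.2 p.1 p.2 hne).choose_spec.2 t ⟨ht, h1, h2⟩).symm
    rw [heq, Finset.offDiag_card, hT.1 t ht]
  rw [Finset.sum_congr rfl hfib, Finset.sum_const, smul_eq_mul] at hcard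
  rw [Finset.offDiag_card, Finset.card_univ, Fintype.card_fin] at hcard
  omega

lemma sum_prod_eq_one {D : Fin v → Fin v → ℝ} (hD : IsDoublyStochastic D)
    (i : Fin 3 → Fin v) :
    ∑ j : Fin 3 → Fin v, ∏ l, D (i l) (j l) = 1 := by
  rw [← Fintype.prod_sum (fun l (a : Fin v) => D (i l) a)]
  simp [hD.2.1]

lemma tensorApply_nonneg {D : Fin v → Fin v → ℝ} (hD : IsDoublyStochastic D)
    (T : Finset (Finset (Fin v))) (i : Fin 3 → Fin v) :
    0 ≤ tensorApply D (stsAdj T) i := by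
  apply Finset.sum_nonneg
  intro j _
  exact mul_nonneg (Finset.prod_nonneg fun l _ => hD.1 _ _) (stsAdj_nonneg T j)

lemma tensorApply_le_one {D : Fin v → Fin v → ℝ} (hD : IsDoublyStochastic D)
    (T : Finset (Finset (Fin v))) (i : Fin 3 → Fin v) :
    tensorApply D (stsAdj T) i ≤ 1 := by
  unfold tensorApply
  calc ∑ j : Fin 3 → Fin v, (∏ l, D (i l) (j l)) * stsAdj T j
      ≤ ∑ j : Fin 3 → Fin v, ∏ l, D (i l) (j l) := by
        apply Finset.sum_le_sum
        intro j _
        exact mul_le_of_le_one_right (Finset.prod_nonneg fun l _ => hD.1 _ _)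
          (stsAdj_le_one T j)
    _ = 1 := sum_prod_eq_one hD i

lemma tinner_le {T₁ T₂ : Finset (Finset (Fin v))} (h₁ : IsSTS v T₁)
    {D : Fin v → Fin v → ℝ} (hD : IsDoublyStochastic D) :
    tinner (stsAdj T₁) (tensorApply D (stsAdj T₂)) ≤ (v : ℝ) * ((v : ℝ) - 1) := by
  unfold tinner
  calc ∑ i : Fin 3 → Fin v, stsAdj T₁ i * tensorApply D (stsAdj T₂) i
      ≤ ∑ i : Fin 3 → Fin v, stsAdj T₁ i := by
        apply Finset.sum_le_sum
        intro i _
        exact mul_le_of_le_one_right (stsAdj_nonneg T₁ i) (tensorApply_le_one hD T₂ i)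
    _ = (v : ℝ) * ((v : ℝ) - 1) := sum_stsAdj h₁

/-- Equality case: an exact alignment yields an isomorphism. -/
lemma eq_iso {T₁ T₂ : Finset (Finset (Fin v))} (h₁ : IsSTS v T₁) (h₂ : IsSTS v T₂)
    (hv : 2 ≤ v) {D : Fin v → Fin v → ℝ} (hD : IsDoublyStochastic D)
    (heq : tinner (stsAdj T₁) (tensorApply D (stsAdj T₂)) = (v : ℝ) * ((v : ℝ) - 1)) :
    ∃ σ : Equiv.Perm (Fin v), T₁.image (fun t => t.image σ) = T₂ := by
  classical
  -- pointwise equality from equality of sums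
  have hptwise : ∀ i : Fin 3 → Fin v,
      stsAdj T₁ i * tensorApply D (stsAdj T₂) i = stsAdj T₁ i := by
    have hle : ∀ i ∈ (Finset.univ : Finset (Fin 3 → Fin v)),
        stsAdj T₁ i * tensorApply D (stsAdj T₂) i ≤ stsAdj T₁ i := fun i _ =>
      mul_le_of_le_one_right (stsAdj_nonneg T₁ i) (tensorApply_le_one hD T₂ i)
    have hsumeq : ∑ i : Fin 3 → Fin v, stsAdj T₁ i * tensorApply D (stsAdj T₂) i
        = ∑ i : Fin 3 → Fin v, stsAdj T₁ i := by
      rw [← tinner.eq_def] at *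
      rw [heq, sum_stsAdj h₁]
    intro i
    exact (Finset.sum_eq_sum_iff_of_le hle).mp hsumeq i (Finset.mem_univ i)
  -- the star property
  have hstar : ∀ i : Fin 3 → Fin v, Function.Injective i → Finset.image i Finset.univ ∈ T₁ →
      ∀ j : Fin 3 → Fin v, (∀ l, 0 < D (i l) (j l)) →
        Function.Injective j ∧ Finset.image j Finset.univ ∈ T₂ := by
    intro i hinj himg j hpos
    have hA1 : stsAdj T₁ i = 1 := stsAdj_eq_one hinj himg
    have hg : tensorApply D (stsAdj T₂) i = 1 := by
      have := hptwise i
      rw [hA1, one_mul] at this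
      exact this
    have hzero : ∑ j' : Fin 3 → Fin v, (∏ l, D (i l) (j' l)) * (1 - stsAdj T₂ j') = 0 := by
      have hexp : ∑ j' : Fin 3 → Fin v, (∏ l, D (i l) (j' l)) * (1 - stsAdj T₂ j')
          = (∑ j' : Fin 3 → Fin v, ∏ l, D (i l) (j' l))
            - ∑ j' : Fin 3 → Fin v, (∏ l, D (i l) (j' l)) * stsAdj T₂ j' := by
        rw [← Finset.sum_sub_distrib]
        congr 1; funext j'; ring
      rw [hexp, sum_prod_eq_one hD i]
      have : ∑ j' : Fin 3 → Fin v, (∏ l, D (i l) (j' l)) * stsAdj T₂ j'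
          = tensorApply D (stsAdj T₂) i := rfl
      rw [this, hg]; ring
    have hterm := (Finset.sum_eq_zero_iff_of_nonneg (fun j' _ =>
      mul_nonneg (Finset.prod_nonneg fun l _ => hD.1 _ _)
        (by linarith [stsAdj_le_one T₂ j']))).mp hzero j (Finset.mem_univ j)
    have hw : 0 < ∏ l, D (i l) (j l) := Finset.prod_pos fun l _ => hpos l
    have hA2 : stsAdj T₂ j = 1 := by
      rcases mul_eq_zero.mp hterm with h | h
      · exact absurd h hw.ne'
      · linarith
    exact stsAdj_prop (by rw [hA2]; norm_num)
  -- each row has a positive entry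
  have hsupp : ∀ x : Fin v, ∃ a, 0 < D x a := by
    intro x
    by_contra hc
    push_neg at hc
    have : ∑ a, D x a = 0 := Finset.sum_eq_zero fun a _ => le_antisymm (hc a) (hD.1 x a)
    rw [hD.2.1 x] at this
    norm_num at this
  -- support is a singleton
  have hsingle : ∀ x a a', 0 < D x a → 0 < D x a' → a = a' := by
    intro x a a' ha ha'
    have : Nontrivial (Fin v) := Fin.nontrivial_iff_two_le.mpr hv
    obtain ⟨y, hyx⟩ := exists_ne x
    obtain ⟨t, ⟨htT, hxt, hyt⟩, _⟩ := h₁.2 x y (Ne.symm hyx)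
    have ht3 := h₁.1 t htT
    obtain ⟨z, hzx, hzy, ht_eq⟩ := exists_third ht3 hxt hyt (Ne.symm hyx)
    obtain ⟨b, hb⟩ := hsupp y
    obtain ⟨c, hc⟩ := hsupp z
    have hxy : x ≠ y := Ne.symm hyx
    have hi : Function.Injective ![x, y, z] := inj_vec hxy (Ne.symm hzx) (Ne.symm hzy)
    have himg : Finset.image ![x, y, z] Finset.univ ∈ T₁ := by
      rw [image_vec, ← ht_eq]; exact htT
    have h1 := hstar _ hi himg ![a, b, c]
      (by intro l; fin_cases l <;> first | exact ha | exact hb | exact hc)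
    have h2 := hstar _ hi himg ![a', b, c]
      (by intro l; fin_cases l <;> first | exact ha' | exact hb | exact hc)
    obtain ⟨hjinj, hjimg⟩ := h1
    obtain ⟨hjinj', hjimg'⟩ := h2
    rw [image_vec] at hjimg hjimg'
    have hbc : b ≠ c := by
      intro h
      exact absurd (hjinj (a₁ := 1) (a₂ := 2) (by simp [h])) (by decide)
    have hab : a ≠ b := by
      intro h
      exact absurd (hjinj (a₁ := 0) (a₂ := 1) (by simp [h])) (by decide)
    have hac : a ≠ c := by
      intro h
      exact absurd (hjinj (a₁ := 0) (a₂ := 2) (by simp [h])) (by decide)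
    obtain ⟨s, _, hsu⟩ := h₂.2 b c hbc
    have heqset : ({a, b, c} : Finset (Fin v)) = {a', b, c} :=
      (hsu _ ⟨hjimg, by simp, by simp⟩).trans (hsu _ ⟨hjimg', by simp, by simp⟩).symm
    have hamem : a ∈ ({a', b, c} : Finset (Fin v)) := heqset ▸ (by simp)
    simp only [Finset.mem_insert, Finset.mem_singleton] at hamem
    rcases hamem with h | h | h
    · exact h
    · exact absurd h hab
    · exact absurd h hac
  -- the permutation
  have hpos : ∀ x, 0 < D x ((hsupp x).choose) := fun x => (hsupp x).choose_spec
  set σ0 : Fin v → Fin v := fun x => (hsupp x).choose with hσ0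
  have hval : ∀ x, D x (σ0 x) = 1 := by
    intro x
    have hrow := hD.2.1 x
    have hothers : ∀ b ∈ (Finset.univ : Finset (Fin v)), b ≠ σ0 x → D x b = 0 := by
      intro b _ hb
      by_contra hne
      exact hb (hsingle x b (σ0 x) (lt_of_le_of_ne (hD.1 x b) (Ne.symm hne)) (hpos x))
    rw [Finset.sum_eq_single_of_mem (σ0 x) (Finset.mem_univ _) hothers] at hrow
    exact hrow
  have hinj : Function.Injective σ0 := by
    intro x x' hxx
    by_contra hne
    have hsumle := Finset.sum_le_sum_of_subset_of_nonneg
      (Finset.subset_univ ({x, x'} : Finset (Fin v))) (fun i _ _ => hD.1 i (σ0 x))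
    rw [Finset.sum_pair hne] at hsumle
    have hcol := hD.2.2 (σ0 x)
    have hv1 := hval x
    have hv2 := hval x'
    rw [← hxx] at hv2
    rw [hcol] at hsumle
    linarith
  have hbij : Function.Bijective σ0 := Finite.injective_iff_bijective.mp hinj
  refine ⟨Equiv.ofBijective σ0 hbij, ?_⟩
  have hTcard : T₁.card = T₂.card := by
    have hc1 := six_mul_card h₁
    have hc2 := six_mul_card h₂
    omega
  have hsub : T₁.image (fun t => t.image (Equiv.ofBijective σ0 hbij)) ⊆ T₂ := by
    intro s hs
    rw [Finset.mem_image] at hs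
    obtain ⟨t, htT, hts⟩ := hs
    obtain ⟨x, y, z, hxy, hxz, hyz, ht_eq⟩ := Finset.card_eq_three.mp (h₁.1 t htT)
    have hi : Function.Injective ![x, y, z] := inj_vec hxy hxz hyz
    have himg : Finset.image ![x, y, z] Finset.univ ∈ T₁ := by
      rw [image_vec, ← ht_eq]; exact htT
    have hj := hstar _ hi himg ![σ0 x, σ0 y, σ0 z]
      (by intro l; fin_cases l <;> first | exact hpos x | exact hpos y | exact hpos z)
    rw [image_vec] at hj
    have hseq : s = {σ0 x, σ0 y, σ0 z} := by
      rw [← hts, ht_eq]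
      simp [Finset.image_insert, Finset.image_singleton, Equiv.ofBijective_apply]
    rw [hseq]
    exact hj.2
  have hcards : (T₁.image (fun t => t.image (Equiv.ofBijective σ0 hbij))).card = T₂.card := by
    rw [Finset.card_image_of_injective _
      (Finset.image_injective (Equiv.ofBijective σ0 hbij).injective), hTcard]
  exact Finset.eq_of_subset_of_card_le hsub (le_of_eq hcards.symm)

lemma tensorApply_id (A : (Fin 3 → Fin v) → ℝ) (i : Fin 3 → Fin v) :
    tensorApply (fun a b : Fin v => if a = b then (1 : ℝ) else 0) A i = A i := by
  unfold tensorApply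
  rw [Finset.sum_eq_single i]
  · simp
  · intro j _ hji
    have hex : ∃ l, i l ≠ j l := by
      by_contra h
      push_neg at h
      exact hji (funext fun l => (h l).symm)
    obtain ⟨l, hl⟩ := hex
    apply mul_eq_zero_of_left
    apply Finset.prod_eq_zero (Finset.mem_univ l)
    simp [hl]
  · intro h
    exact absurd (Finset.mem_univ i) h

end STSAux

theorem sts_sinkhorn_strict_separation (v : ℕ) (T₁ T₂ : Finset (Finset (Fin v)))
    (h₁ : IsSTS v T₁) (h₂ : IsSTS v T₂)
    (hniso : ¬ ∃ σ : Equiv.Perm (Fin v), T₁.image (fun t => t.image σ) = T₂) :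
    (∀ D : Fin v → Fin v → ℝ, IsDoublyStochastic D →
      tinner (stsAdj T₁) (tensorApply D (stsAdj T₂)) < (v : ℝ) * ((v : ℝ) - 1)) ∧
    sSup ((fun D : Fin v → Fin v → ℝ => tinner (stsAdj T₁) (tensorApply D (stsAdj T₂))) ''
        {D | IsDoublyStochastic D}) < (v : ℝ) * ((v : ℝ) - 1) ∧
    sSup ((fun D : Fin v → Fin v → ℝ => tinner (stsAdj T₁) (tensorApply D (stsAdj T₁))) ''
        {D | IsDoublyStochastic D}) = (v : ℝ) * ((v : ℝ) - 1) := by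
  classical
  by_cases hv : 2 ≤ v
  swap
  · exfalso
    apply hniso
    have hempty : ∀ T : Finset (Finset (Fin v)), IsSTS v T → T = ∅ := by
      intro T hT
      rw [Finset.eq_empty_iff_forall_notMem]
      intro t ht
      have h3 := hT.1 t ht
      have hle := Finset.card_le_card (Finset.subset_univ t)
      rw [Finset.card_univ, Fintype.card_fin] at hle
      omega
    exact ⟨1, by rw [hempty T₁ h₁, hempty T₂ h₂, Finset.image_empty]⟩
  -- part 1
  have part1 : ∀ D : Fin v → Fin v → ℝ, IsDoublyStochastic D →
      tinner (stsAdj T₁) (tensorApply D (stsAdj T₂)) < (v : ℝ) * ((v : ℝ) - 1) := by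
    intro D hD
    rcases lt_or_eq_of_le (STSAux.tinner_le h₁ hD) with h | h
    · exact h
    · exact absurd (STSAux.eq_iso h₁ h₂ hv hD h) hniso
  refine ⟨part1, ?_, ?_⟩
  -- identity matrix
  · have hId : IsDoublyStochastic (fun i j : Fin v => if i = j then (1 : ℝ) else 0) := by
      refine ⟨fun i j => by dsimp only; split <;> norm_num, fun i => by simp, fun j => by simp⟩
    have hev : ∀ (i j : Fin v), Continuous fun D : Fin v → Fin v → ℝ => D i j :=
      fun i j => (continuous_apply j).comp (continuous_apply i)
    have hKcl : IsClosed {D : Fin v → Fin v → ℝ | IsDoublyStochastic D} := by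
      have hset : {D : Fin v → Fin v → ℝ | IsDoublyStochastic D} =
          (⋂ i, ⋂ j, {D : Fin v → Fin v → ℝ | 0 ≤ D i j}) ∩
          ((⋂ i, {D : Fin v → Fin v → ℝ | ∑ j, D i j = 1}) ∩
           (⋂ j, {D : Fin v → Fin v → ℝ | ∑ i, D i j = 1})) := by
        ext D
        simp [IsDoublyStochastic, Set.mem_iInter, Set.mem_setOf_eq]
      rw [hset]
      refine IsClosed.inter ?_ (IsClosed.inter ?_ ?_)
      · exact isClosed_iInter fun i => isClosed_iInter fun j =>
          isClosed_le continuous_const (hev i j)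
      · exact isClosed_iInter fun i =>
          isClosed_eq (continuous_finset_sum _ fun j _ => hev i j) continuous_const
      · exact isClosed_iInter fun j =>
          isClosed_eq (continuous_finset_sum _ fun i _ => hev i j) continuous_const
    have hKsub : {D : Fin v → Fin v → ℝ | IsDoublyStochastic D} ⊆
        Set.pi Set.univ (fun _ : Fin v => Set.pi Set.univ
          fun _ : Fin v => Set.Icc (0 : ℝ) 1) := by
      intro D hD
      rw [Set.mem_pi]
      intro i _
      rw [Set.mem_pi]
      intro j _
      refine ⟨hD.1 i j, ?_⟩
      have := Finset.single_le_sum (f := fun a => D i a) (fun a _ => hD.1 i a)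
        (Finset.mem_univ j)
      rw [hD.2.1 i] at this
      exact this
    have hKcp : IsCompact {D : Fin v → Fin v → ℝ | IsDoublyStochastic D} :=
      IsCompact.of_isClosed_subset
        (isCompact_univ_pi fun _ => isCompact_univ_pi fun _ => isCompact_Icc) hKcl hKsub
    have hFcont : Continuous fun D : Fin v → Fin v → ℝ =>
        tinner (stsAdj T₁) (tensorApply D (stsAdj T₂)) := by
      unfold tinner tensorApply
      apply continuous_finset_sum
      intro i _
      apply Continuous.mul continuous_const
      apply continuous_finset_sum
      intro j _
      exact Continuous.mul
        (continuous_finset_prod _ fun l _ => (continuous_apply (j l)).comp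
          (continuous_apply (i l))) continuous_const
    have himgne : ((fun D : Fin v → Fin v → ℝ =>
        tinner (stsAdj T₁) (tensorApply D (stsAdj T₂))) ''
          {D | IsDoublyStochastic D}).Nonempty :=
      ⟨_, ⟨_, hId, rfl⟩⟩
    have hFK := hKcp.image hFcont
    obtain ⟨D0, hD0, hFD0⟩ := hFK.sSup_mem himgne
    rw [← hFD0]
    exact part1 D0 hD0
  -- part 3
  · have hId : IsDoublyStochastic (fun i j : Fin v => if i = j then (1 : ℝ) else 0) := by
      refine ⟨fun i j => by dsimp only; split <;> norm_num, fun i => by simp, fun j => by simp⟩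
    have hGval : tinner (stsAdj T₁)
        (tensorApply (fun i j : Fin v => if i = j then (1 : ℝ) else 0) (stsAdj T₁))
          = (v : ℝ) * ((v : ℝ) - 1) := by
      unfold tinner
      calc ∑ i : Fin 3 → Fin v, stsAdj T₁ i *
            tensorApply (fun a b : Fin v => if a = b then (1 : ℝ) else 0) (stsAdj T₁) i
          = ∑ i : Fin 3 → Fin v, stsAdj T₁ i := by
            apply Finset.sum_congr rfl
            intro i _
            rw [STSAux.tensorApply_id, STSAux.stsAdj_mul_self]
        _ = (v : ℝ) * ((v : ℝ) - 1) := STSAux.sum_stsAdj h₁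
    have hbdd : ∀ y ∈ ((fun D : Fin v → Fin v → ℝ =>
        tinner (stsAdj T₁) (tensorApply D (stsAdj T₁))) '' {D | IsDoublyStochastic D}),
        y ≤ (v : ℝ) * ((v : ℝ) - 1) := by
      rintro y ⟨D, hD, rfl⟩
      exact STSAux.tinner_le h₁ hD
    refine le_antisymm (csSup_le ⟨_, ⟨_, hId, rfl⟩⟩ hbdd) ?_
    exact le_csSup ⟨_, fun y hy => hbdd y hy⟩ ⟨_, hId, hGval⟩
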